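/- Let h be a homeomorphism of a compact metric space X that is chain-transitive, and let x, y ∈ X. Let π : X̂ → X be a two-fold covering, with each x ∈ X having preimages x̂⁻, x̂⁺, and ĥ a lift of h. Then for every pair x, y ∈ X, lifting pseudo-orbits shows at least one of the following holds: (x̂⁻ ⊣ ŷ⁻ and x̂⁺ ⊣ ŷ⁺) or (x̂⁻ ⊣ ŷ⁺ and x̂⁺ ⊣ ŷ⁻), where ⊣ denotes the pseudo-orbit chain relation for ĥ. Consequently, every chain-recurrence class of ĥ in X̂ projects by π onto all of X. -/
import Mathlib


open Set

/-- `a ⊣ b`: for every `ε > 0` there is an `ε`-pseudo-orbit from `a` to `b` of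
length `≥ 1`. -/
def ChainRel {X : Type*} [MetricSpace X] (h : X → X) (x y : X) : Prop :=
  ∀ ε : ℝ, 0 < ε → ∃ n : ℕ, 1 ≤ n ∧ ∃ z : ℕ → X, z 0 = x ∧ z n = y ∧
    ∀ k < n, dist (h (z k)) (z (k + 1)) < ε

/-- A chain-transitive compact invariant set. -/
def ChainTransSet {X : Type*} [MetricSpace X] (h : X → X) (C : Set X) : Prop :=
  IsCompact C ∧ h '' C = C ∧ ∀ p ∈ C, ∀ q ∈ C, ChainRel h p q

/-- A chain-recurrence class: a maximal chain-transitive compact invariant set. -/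
def IsChainClass {X : Type*} [MetricSpace X] (h : X → X) (C : Set X) : Prop :=
  ChainTransSet h C ∧ ∀ C', ChainTransSet h C' → C ⊆ C' → C' = C

section Aux

set_option linter.unusedSectionVars false

variable {Y : Type*} [MetricSpace Y]

/-- An `ε`-pseudo-orbit from `a` to `b` of length at least 1. -/
def HasChain (f : Y → Y) (ε : ℝ) (a b : Y) : Prop :=
  ∃ n : ℕ, 1 ≤ n ∧ ∃ z : ℕ → Y, z 0 = a ∧ z n = b ∧
    ∀ k < n, dist (f (z k)) (z (k + 1)) < ε

lemma chainRel_iff {f : Y → Y} {a b : Y} :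
    ChainRel f a b ↔ ∀ ε : ℝ, 0 < ε → HasChain f ε a b := Iff.rfl

lemma HasChain.mono {f : Y → Y} {a b : Y} {δ ε : ℝ} (h : δ ≤ ε)
    (hc : HasChain f δ a b) : HasChain f ε a b := by
  obtain ⟨n, hn, z, h0, h1, h2⟩ := hc
  exact ⟨n, hn, z, h0, h1, fun k hk => (h2 k hk).trans_le h⟩

lemma HasChain.trans {f : Y → Y} {a b c : Y} {ε : ℝ}
    (h1 : HasChain f ε a b) (h2 : HasChain f ε b c) : HasChain f ε a c := by
  obtain ⟨n, hn, z, hz0, hzn, hz⟩ := h1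
  obtain ⟨m, hm, w, hw0, hwm, hw⟩ := h2
  refine ⟨n + m, by omega, fun k => if k < n then z k else w (k - n), ?_, ?_, ?_⟩
  · simp [show 0 < n by omega, hz0]
  · simp only [show ¬ n + m < n by omega, if_false, show n + m - n = m by omega, hwm]
  · intro k hk
    by_cases hkn : k < n
    · have hk1 : (if k + 1 < n then z (k + 1) else w (k + 1 - n)) = z (k + 1) := by
        by_cases h' : k + 1 < n
        · simp [h']
        · have hkn' : k + 1 = n := by omega
          simp [h', hkn', hw0, hzn]
      simp only [hkn, if_true, hk1]
      exact hz k hkn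
    · have h1' : ¬ k + 1 < n := by omega
      have h2' : k + 1 - n = k - n + 1 := by omega
      simp only [hkn, if_false, h1', h2']
      exact hw (k - n) (by omega)

lemma ChainRel.trans {f : Y → Y} {a b c : Y}
    (h1 : ChainRel f a b) (h2 : ChainRel f b c) : ChainRel f a c :=
  fun ε hε => HasChain.trans (h1 ε hε) (h2 ε hε)

lemma ChainRel.append {f : Y → Y} {a b : Y} (h : ChainRel f a b) :
    ChainRel f a (f b) := by
  intro ε hε
  obtain ⟨n, hn, z, hz0, hzn, hz⟩ := h ε hε
  refine ⟨n + 1, by omega, fun k => if k ≤ n then z k else f b, ?_, ?_, ?_⟩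
  · simp [hz0]
  · simp [show ¬ n + 1 ≤ n by omega]
  · intro k hk
    by_cases h' : k < n
    · simp only [show k ≤ n by omega, if_true, show k + 1 ≤ n by omega, if_true]
      exact hz k h'
    · have hk' : k = n := by omega
      subst hk'
      simp [show ¬ k + 1 ≤ k by omega, hzn, hε]

lemma ChainRel.prepend {f : Y ≃ₜ Y} {a b : Y} (h : ChainRel (⇑f) a b) :
    ChainRel (⇑f) (f.symm a) b := by
  intro ε hε
  obtain ⟨n, hn, z, hz0, hzn, hz⟩ := h ε hε
  refine ⟨n + 1, by omega, fun k => if k = 0 then f.symm a else z (k - 1), ?_, ?_, ?_⟩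
  · simp
  · simp [hzn]
  · intro k hk
    by_cases h' : k = 0
    · subst h'
      simp [hz0, f.apply_symm_apply, hε]
    · have h1 : ¬ k + 1 = 0 := by omega
      have h2 : k + 1 - 1 = k - 1 + 1 := by omega
      simp only [h', if_false, h1, h2]
      exact hz (k - 1) (by omega)

variable [CompactSpace Y]

lemma unif_cont {f : Y → Y} (hf : Continuous f) {ε : ℝ} (hε : 0 < ε) :
    ∃ δ, 0 < δ ∧ ∀ u v : Y, dist u v < δ → dist (f u) (f v) < ε := by
  rcases Metric.uniformContinuous_iff.1
    (CompactSpace.uniformContinuous_of_continuous hf) ε hε with ⟨δ, hδ, H⟩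
  exact ⟨δ, hδ, fun u v h => H h⟩

/-- Applying a commuting homeomorphism to a chain. -/
lemma ChainRel.map {f g : Y → Y} (hg : Continuous g)
    (hcom : ∀ y, g (f y) = f (g y)) {a b : Y}
    (h : ChainRel f a b) : ChainRel f (g a) (g b) := by
  intro ε hε
  obtain ⟨δ, hδ, H⟩ := unif_cont hg hε
  obtain ⟨n, hn, z, hz0, hzn, hz⟩ := h δ hδ
  refine ⟨n, hn, fun k => g (z k), by simp [hz0], by simp [hzn], fun k hk => ?_⟩
  simp only
  rw [← hcom]
  exact H _ _ (hz k hk)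

/-- Shift lemma for a recurrent point: `a ⊣ a` implies `f a ⊣ a`. -/
lemma ChainRel.shift_self {f : Y → Y} (hf : Continuous f) {a : Y}
    (h : ChainRel f a a) : ChainRel f (f a) a := by
  intro ε hε
  obtain ⟨δ₀, hδ₀, H⟩ := unif_cont hf (half_pos hε)
  have hδ : 0 < min δ₀ (ε / 2) := lt_min hδ₀ (half_pos hε)
  obtain ⟨n, hn, z, hz0, hzn, hz⟩ := h (min δ₀ (ε / 2)) hδ
  rcases eq_or_lt_of_le hn with h1 | h2
  · -- n = 1 : dist (f a) a < δ
    obtain rfl := h1.symm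
    have hd : dist (f a) a < min δ₀ (ε / 2) := by
      have hh := hz 0 (by omega)
      rw [hz0] at hh
      simpa [hzn] using hh
    refine ⟨1, le_rfl, fun k => if k = 0 then f a else a, by norm_num, by norm_num, ?_⟩
    intro k hk
    have hk0 : k = 0 := by omega
    subst hk0
    beta_reduce
    rw [if_pos rfl, if_neg (by norm_num : ¬ (0+1 = 0))]
    calc dist (f (f a)) a ≤ dist (f (f a)) (f a) + dist (f a) a := dist_triangle _ _ _
      _ < ε / 2 + ε / 2 :=
          add_lt_add (H _ _ (hd.trans_le (min_le_left _ _)))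
            (hd.trans_le (min_le_right _ _))
      _ = ε := add_halves ε
  · -- n ≥ 2
    refine ⟨n - 1, by omega, fun k => if k = 0 then f a else z (k + 1), by norm_num, ?_, ?_⟩
    · beta_reduce
      rw [if_neg (show ¬ n - 1 = 0 by omega), show n - 1 + 1 = n by omega, hzn]
    · intro k hk
      by_cases h' : k = 0
      · subst h'
        beta_reduce
        rw [if_pos rfl, if_neg (by norm_num : ¬ (0+1 = 0))]
        have hd0 : dist (f a) (z 1) < min δ₀ (ε / 2) := by
          have hh := hz 0 (by omega); rwa [hz0] at hh
        calc dist (f (f a)) (z (1 + 1))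
            ≤ dist (f (f a)) (f (z 1)) + dist (f (z 1)) (z (1 + 1)) := dist_triangle _ _ _
          _ < ε / 2 + ε / 2 :=
              add_lt_add (H _ _ (hd0.trans_le (min_le_left _ _)))
                ((hz 1 (by omega)).trans_le (min_le_right _ _))
          _ = ε := add_halves ε
      · beta_reduce
        rw [if_neg h', if_neg (show ¬ k + 1 = 0 by omega)]
        exact (hz (k + 1) (by omega)).trans_le
          ((min_le_right _ _).trans (half_le_self hε.le))

/-- `{d | c ⊣ d}` is closed. -/
lemma isClosed_chainRel_from (f : Y → Y) (c : Y) :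
    IsClosed {d : Y | ChainRel f c d} := by
  refine isClosed_of_closure_subset fun d hd => ?_
  intro ε hε
  obtain ⟨d', hd', hdd'⟩ := Metric.mem_closure_iff.1 hd (ε / 2) (half_pos hε)
  obtain ⟨n, hn, z, hz0, hzn, hz⟩ := hd' (ε / 2) (half_pos hε)
  refine ⟨n, hn, fun k => if k = n then d else z k, ?_, by simp, ?_⟩
  · beta_reduce
    rw [if_neg (show ¬ 0 = n by omega), hz0]
  · intro k hk
    beta_reduce
    rw [if_neg (show ¬ k = n by omega)]
    by_cases h' : k + 1 = n
    · rw [if_pos h']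
      calc dist (f (z k)) d ≤ dist (f (z k)) (z (k + 1)) + dist (z (k + 1)) d :=
            dist_triangle _ _ _
        _ < ε / 2 + ε / 2 := by
            refine add_lt_add (hz k hk) ?_
            rw [h', hzn, dist_comm]
            exact hdd'
        _ = ε := add_halves ε
    · rw [if_neg h']
      exact (hz k hk).trans_le (half_le_self hε.le)

/-- `{d | d ⊣ c}` is closed. -/
lemma isClosed_chainRel_to {f : Y → Y} (hf : Continuous f) (c : Y) :
    IsClosed {d : Y | ChainRel f d c} := by
  refine isClosed_of_closure_subset fun d hd => ?_
  intro ε hε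
  obtain ⟨δ₀, hδ₀, H⟩ := unif_cont hf (half_pos hε)
  obtain ⟨d', hd', hdd'⟩ := Metric.mem_closure_iff.1 hd (min δ₀ (ε / 2))
    (lt_min hδ₀ (half_pos hε))
  obtain ⟨n, hn, z, hz0, hzn, hz⟩ := hd' (ε / 2) (half_pos hε)
  refine ⟨n, hn, fun k => if k = 0 then d else z k, by simp, ?_, ?_⟩
  · beta_reduce
    rw [if_neg (show ¬ n = 0 by omega), hzn]
  · intro k hk
    by_cases h' : k = 0
    · subst h'
      beta_reduce
      rw [if_pos rfl, if_neg (by norm_num : ¬ (0+1 = 0))]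
      calc dist (f d) (z 1) ≤ dist (f d) (f d') + dist (f d') (z 1) := by
            rw [← hz0]; exact dist_triangle _ _ _
        _ < ε / 2 + ε / 2 := by
            refine add_lt_add (H _ _ (hdd'.trans_le (min_le_left _ _))) ?_
            simpa [hz0] using hz 0 (show 0 < n by omega)
        _ = ε := add_halves ε
    · beta_reduce
      rw [if_neg h', if_neg (show ¬ k + 1 = 0 by omega)]
      exact (hz k hk).trans_le (half_le_self hε.le)

end Aux

/-- Let `h` be a chain-transitive homeomorphism of the compact metric space `X`
and `π : X̂ → X` a two-fold covering (with deck involution `σ` and a metric on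
`X̂` making `π` an isometry on small balls, with the lifting property), and `ĥ` a
lift of `h`. Then for all `a, b ∈ X̂` (lying over `x, y ∈ X`), at least one of
`(a ⊣ b and σa ⊣ σb)` or `(a ⊣ σb and σa ⊣ b)` holds for `ĥ`; consequently every
chain-recurrence class of `ĥ` projects by `π` onto all of `X`. -/
theorem stmt9 {X Xhat : Type*} [MetricSpace X] [CompactSpace X]
    [MetricSpace Xhat] [CompactSpace Xhat]
    (h : X ≃ₜ X) (hhat : Xhat ≃ₜ Xhat) (σ : Xhat ≃ₜ Xhat) (π : Xhat → X)
    (hπcont : Continuous π) (hπsurj : Function.Surjective π)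
    (hπσ : ∀ a, π (σ a) = π a) (hσinv : ∀ a, σ (σ a) = a)
    (hσfree : ∀ a, σ a ≠ a)
    (hfib : ∀ a b, π a = π b → b = a ∨ b = σ a)
    (hliftmap : ∀ a, π (hhat a) = h (π a))
    (hcomm : ∀ a, hhat (σ a) = σ (hhat a))
    (r : ℝ) (hr : 0 < r)
    (hπiso : ∀ a b : Xhat, dist a b < r → dist (π a) (π b) = dist a b)
    (hπlift : ∀ (a : Xhat) (y : X), dist (π a) y < r →
        ∃ b : Xhat, π b = y ∧ dist a b = dist (π a) y)
    (hct : ∀ x y : X, ChainRel (⇑h) x y) :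
    (∀ a b : Xhat,
        (ChainRel (⇑hhat) a b ∧ ChainRel (⇑hhat) (σ a) (σ b)) ∨
        (ChainRel (⇑hhat) a (σ b) ∧ ChainRel (⇑hhat) (σ a) b)) ∧
      ∀ C : Set Xhat, IsChainClass (⇑hhat) C → π '' C = univ := by
  have hac : Continuous ⇑hhat := hhat.continuous
  have hmapσ : ∀ {a b : Xhat}, ChainRel ⇑hhat a b → ChainRel ⇑hhat (σ a) (σ b) :=
    fun {a b} h' => h'.map σ.continuous (fun y => (hcomm y).symm)
  -- The lifting lemma
  have lift : ∀ (a b : Xhat) (ε : ℝ), 0 < ε →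
      HasChain ⇑hhat ε a b ∨ HasChain ⇑hhat ε a (σ b) := by
    intro a b ε hε
    obtain ⟨n, hn, z, hz0, hzn, hz⟩ := hct (π a) (π b) (min ε r) (lt_min hε hr)
    have key : ∀ m, m ≤ n → ∃ w : ℕ → Xhat, w 0 = a ∧ (∀ k, k ≤ m → π (w k) = z k) ∧
        ∀ k, k < m → dist (hhat (w k)) (w (k + 1)) < ε := by
      intro m
      induction m with
      | zero =>
        intro _
        refine ⟨fun _ => a, rfl, ?_, by omega⟩
        intro k hk
        have hk0 : k = 0 := Nat.le_zero.mp hk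
        subst hk0
        simpa using hz0.symm
      | succ m ih =>
        intro hm
        obtain ⟨w, hw0, hwπ, hwd⟩ := ih (by omega)
        have h1 : dist (π (hhat (w m))) (z (m + 1)) < r := by
          rw [hliftmap, hwπ m le_rfl]
          exact (hz m (by omega)).trans_le (min_le_right _ _)
        obtain ⟨b', hb'π, hb'd⟩ := hπlift _ _ h1
        refine ⟨fun k => if k ≤ m then w k else b', by simp [hw0], ?_, ?_⟩
        · intro k hk
          by_cases h' : k ≤ m
          · beta_reduce; rw [if_pos h']; exact hwπ k h'
          · beta_reduce; rw [if_neg h']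
            have hk1 : k = m + 1 := by omega
            rw [hb'π, hk1]
        · intro k hk
          by_cases h' : k < m
          · beta_reduce
            rw [if_pos (show k ≤ m by omega), if_pos (show k + 1 ≤ m by omega)]
            exact hwd k h'
          · have hk' : k = m := by omega
            subst hk'
            beta_reduce
            rw [if_pos le_rfl, if_neg (show ¬ k + 1 ≤ k by omega)]
            rw [hb'd, hliftmap, hwπ k le_rfl]
            exact (hz k (by omega)).trans_le (min_le_left _ _)
    obtain ⟨w, hw0, hwπ, hwd⟩ := key n le_rfl
    have hπn : π (w n) = π b := by rw [hwπ n le_rfl, hzn]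
    rcases hfib (w n) b hπn with hb | hb
    · exact Or.inl ⟨n, hn, w, hw0, hb.symm, hwd⟩
    · refine Or.inr ⟨n, hn, w, hw0, ?_, hwd⟩
      rw [hb, hσinv]
  -- The dichotomy
  have dich : ∀ a b : Xhat,
      (ChainRel ⇑hhat a b ∧ ChainRel ⇑hhat (σ a) (σ b)) ∨
      (ChainRel ⇑hhat a (σ b) ∧ ChainRel ⇑hhat (σ a) b) := by
    intro a b
    by_cases hP : ChainRel ⇑hhat a b
    · exact Or.inl ⟨hP, hmapσ hP⟩
    · right
      rw [chainRel_iff] at hP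
      push_neg at hP
      obtain ⟨ε₀, hε₀, hno⟩ := hP
      have h1 : ChainRel ⇑hhat a (σ b) := by
        intro ε hε
        rcases lift a b (min ε ε₀) (lt_min hε hε₀) with hc | hc
        · exact absurd (hc.mono (min_le_right _ _)) hno
        · exact hc.mono (min_le_left _ _)
      refine ⟨h1, ?_⟩
      have h2 := hmapσ h1
      rwa [hσinv] at h2
  -- every point is chain recurrent
  have hrec : ∀ a : Xhat, ChainRel ⇑hhat a a := by
    intro a
    rcases dich a a with ⟨h1, _⟩ | ⟨h1, h2⟩
    · exact h1
    · exact h1.trans h2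
  -- the sets D a are chain transitive
  have hD : ∀ a : Xhat,
      ChainTransSet ⇑hhat {d | ChainRel ⇑hhat a d ∧ ChainRel ⇑hhat d a} := by
    intro a
    have hcomm' : ∀ y : Xhat, hhat.symm (hhat y) = hhat (hhat.symm y) := by simp
    have ha' : ChainRel ⇑hhat a (hhat.symm a) := by
      have hh := (ChainRel.shift_self hac (hrec a)).map hhat.symm.continuous hcomm'
      rwa [hhat.symm_apply_apply] at hh
    refine ⟨?_, ?_, ?_⟩
    · exact ((isClosed_chainRel_from ⇑hhat a).inter (isClosed_chainRel_to hac a)).isCompact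
    · apply Set.Subset.antisymm
      · rintro _ ⟨d, ⟨h1, h2⟩, rfl⟩
        exact ⟨h1.append, (h2.map hac (fun y => rfl)).trans
          (ChainRel.shift_self hac (hrec a))⟩
      · rintro d ⟨h1, h2⟩
        refine ⟨hhat.symm d, ⟨?_, h2.prepend⟩, hhat.apply_symm_apply d⟩
        exact ha'.trans (h1.map hhat.symm.continuous hcomm')
    · rintro p ⟨_, hp2⟩ q ⟨hq1, _⟩
      exact hp2.trans hq1
  refine ⟨dich, ?_⟩
  intro C hC
  rcases isEmpty_or_nonempty Xhat with hE | hNE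
  · have hXE : IsEmpty X := ⟨fun x => by obtain ⟨a, _⟩ := hπsurj x; exact hE.false a⟩
    ext x
    exact hXE.elim x
  · have hCne : C.Nonempty := by
      by_contra hc
      rw [Set.not_nonempty_iff_eq_empty] at hc
      obtain ⟨a⟩ := hNE
      have hDa := hC.2 _ (hD a) (by rw [hc]; exact empty_subset _)
      have ha : a ∈ {d | ChainRel ⇑hhat a d ∧ ChainRel ⇑hhat d a} := ⟨hrec a, hrec a⟩
      rw [hDa, hc] at ha
      exact ha
    obtain ⟨c, hcC⟩ := hCne
    have hDC : {d | ChainRel ⇑hhat c d ∧ ChainRel ⇑hhat d c} = C := by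
      refine hC.2 _ (hD c) ?_
      intro p hp
      exact ⟨hC.1.2.2 c hcC p hp, hC.1.2.2 p hp c hcC⟩
    refine Set.eq_univ_of_forall fun x => ?_
    obtain ⟨b, hb⟩ := hπsurj x
    have hgetd : ∃ d : Xhat, π d = x ∧ ChainRel ⇑hhat c d ∧ ChainRel ⇑hhat d c := by
      rcases dich c b with ⟨h1, _⟩ | ⟨h1, h2⟩
      · rcases dich b c with ⟨g1, _⟩ | ⟨g1, g2⟩
        · exact ⟨b, hb, h1, g1⟩
        · exact ⟨b, hb, h1, g1.trans ((hmapσ h1).trans g2)⟩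
      · rcases dich (σ b) c with ⟨g1, _⟩ | ⟨g1, g2⟩
        · exact ⟨σ b, by rw [hπσ, hb], h1, g1⟩
        · rw [hσinv] at g2
          exact ⟨σ b, by rw [hπσ, hb], h1, g1.trans (h2.trans g2)⟩
    obtain ⟨d, hdx, hd1, hd2⟩ := hgetd
    have hdC : d ∈ C := by
      rw [← hDC]
      exact ⟨hd1, hd2⟩
    exact ⟨d, hdC, hdx⟩
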